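/- The function f (mapping Σ (−1)^k ε_k/(q_1⋯q_k) to Σ ε_k/(−q)^k, 2 ≤ q_k ≤ q) is the unique bounded function on [a_0−1, a_0] satisfying the infinite system of functional equations f(σ^{k−1}(x)) = −ε_k/q − (1/q) f(σ^k(x)) for all k ≥ 1 and all x = Σ (−1)^n ε_n/(q_1⋯q_n). -/

import Mathlib

/-- `σⁿ(x) = Σ_{k≥n+1} (−1)^{k−n} ε_k/(q_{n+1}⋯q_k)`, the `n`-th shift of the alternating
Cantor expansion with digits `e` (so `σ⁰(x) = x`). -/
noncomputable def sigv (q e : ℕ → ℕ) (n : ℕ) : ℝ :=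
  ∑' j : ℕ, (-1 : ℝ) ^ (j + 1) * (e (n + j) : ℝ) / ∏ i ∈ Finset.range (j + 1), (q (n + i) : ℝ)

lemma stmt13_aux (q0 : ℕ) (q : ℕ → ℕ) (hq2 : ∀ k, 2 ≤ q k) (hqq : ∀ k, q k ≤ q0)
    (F : ℝ → ℝ) (hFb : ∃ M, ∀ x, |F x| ≤ M)
    (hF : ∀ e : ℕ → ℕ, (∀ k, e k < q k) → ∀ n : ℕ,
      F (sigv q e n) = -(e n : ℝ) / (q0 : ℝ) - (1 / (q0 : ℝ)) * F (sigv q e (n + 1)))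
    (e : ℕ → ℕ) (he : ∀ k, e k < q k) :
    F (sigv q e 0) = (∑' k : ℕ, (e k : ℝ) / (-(q0 : ℝ)) ^ (k + 1)) := by
  obtain ⟨M, hM⟩ := hFb
  have hq0 : (2 : ℝ) ≤ (q0 : ℝ) := by
    exact_mod_cast le_trans (hq2 0) (hqq 0)
  have hq0pos : (0 : ℝ) < q0 := by linarith
  have hq0ne : (q0 : ℝ) ≠ 0 := ne_of_gt hq0pos
  have hlt : |1 / (q0 : ℝ)| < 1 := by
    rw [abs_of_pos (by positivity), div_lt_one hq0pos]; linarith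
  have hc : ∀ n : ℕ, (e n : ℝ) / (-(q0 : ℝ)) ^ (n + 1)
      = (-1 / (q0 : ℝ)) ^ n * (-(e n : ℝ) / q0) := by
    intro n
    rw [neg_pow]
    rw [div_pow, neg_pow (1 : ℝ)]
    rcases Nat.even_or_odd n with h | h
    · rw [h.neg_one_pow, (h.add_one).neg_one_pow]
      field_simp
      ring
    · rw [h.neg_one_pow, (h.add_one).neg_one_pow]
      field_simp
      ring
  have key : ∀ n, F (sigv q e 0) =
      (∑ k ∈ Finset.range n, (e k : ℝ) / (-(q0 : ℝ)) ^ (k + 1))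
        + (-1 / (q0 : ℝ)) ^ n * F (sigv q e n) := by
    intro n
    induction n with
    | zero => simp
    | succ n ih =>
      rw [ih, hF e he n, Finset.sum_range_succ, hc n]
      ring
  have hsum : Summable (fun k : ℕ => (e k : ℝ) / (-(q0 : ℝ)) ^ (k + 1)) := by
    apply Summable.of_norm
    have hb : ∀ k : ℕ, ‖(e k : ℝ) / (-(q0 : ℝ)) ^ (k + 1)‖
        ≤ ((q0 : ℝ) * (1 / (q0 : ℝ))) * (1 / (q0 : ℝ)) ^ k := by
      intro k
      have hek : (e k : ℝ) ≤ q0 := by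
        exact_mod_cast le_trans (le_of_lt (he k)) (hqq k)
      rw [norm_div, norm_pow, norm_neg, Real.norm_natCast, Real.norm_natCast]
      have : ((q0 : ℝ) * (1 / (q0 : ℝ))) * (1 / (q0 : ℝ)) ^ k = (q0 : ℝ) / (q0 : ℝ) ^ (k + 1) := by
        field_simp; rw [pow_succ, ← mul_assoc, ← mul_pow, one_div, inv_mul_cancel₀ hq0ne, one_pow, one_mul]
      rw [this]
      gcongr
    exact Summable.of_nonneg_of_le (fun k => norm_nonneg _) hb
      ((summable_geometric_of_abs_lt_one hlt).mul_left _)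
  have hM0 : 0 ≤ M := le_trans (abs_nonneg _) (hM 0)
  have hten : Filter.Tendsto
      (fun n => ∑ k ∈ Finset.range n, (e k : ℝ) / (-(q0 : ℝ)) ^ (k + 1))
      Filter.atTop (nhds (F (sigv q e 0))) := by
    rw [tendsto_iff_norm_sub_tendsto_zero]
    have hb : ∀ n : ℕ,
        ‖(∑ k ∈ Finset.range n, (e k : ℝ) / (-(q0 : ℝ)) ^ (k + 1)) - F (sigv q e 0)‖
          ≤ (1 / (q0 : ℝ)) ^ n * M := by
      intro n
      have h1 : (∑ k ∈ Finset.range n, (e k : ℝ) / (-(q0 : ℝ)) ^ (k + 1)) - F (sigv q e 0)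
          = -((-1 / (q0 : ℝ)) ^ n * F (sigv q e n)) := by
        rw [key n]; ring
      rw [h1, norm_neg, norm_mul, norm_pow, Real.norm_eq_abs, Real.norm_eq_abs]
      have h2 : |(-1 / (q0 : ℝ))| = 1 / (q0 : ℝ) := by
        rw [abs_div, abs_neg, abs_one, abs_of_pos hq0pos]
      rw [h2]
      exact mul_le_mul_of_nonneg_left (hM _) (by positivity)
    have hz : Filter.Tendsto (fun n : ℕ => (1 / (q0 : ℝ)) ^ n * M) Filter.atTop (nhds 0) := by
      have := (tendsto_pow_atTop_nhds_zero_of_abs_lt_one hlt).mul_const M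
      simpa using this
    exact squeeze_zero (fun n => norm_nonneg _) hb hz
  exact tendsto_nhds_unique hten hsum.hasSum.tendsto_sum_nat

theorem stmt13 (q0 : ℕ) (q : ℕ → ℕ) (hq2 : ∀ k, 2 ≤ q k) (hqq : ∀ k, q k ≤ q0)
    (F G : ℝ → ℝ)
    (hFb : ∃ M, ∀ x, |F x| ≤ M) (hGb : ∃ M, ∀ x, |G x| ≤ M)
    (hF : ∀ e : ℕ → ℕ, (∀ k, e k < q k) → ∀ n : ℕ,
      F (sigv q e n) = -(e n : ℝ) / (q0 : ℝ) - (1 / (q0 : ℝ)) * F (sigv q e (n + 1)))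
    (hG : ∀ e : ℕ → ℕ, (∀ k, e k < q k) → ∀ n : ℕ,
      G (sigv q e n) = -(e n : ℝ) / (q0 : ℝ) - (1 / (q0 : ℝ)) * G (sigv q e (n + 1))) :
    ∀ e : ℕ → ℕ, (∀ k, e k < q k) →
      F (sigv q e 0) = (∑' k : ℕ, (e k : ℝ) / (-(q0 : ℝ)) ^ (k + 1)) ∧
        F (sigv q e 0) = G (sigv q e 0) := by
  intro e he
  have h1 := stmt13_aux q0 q hq2 hqq F hFb hF e he
  have h2 := stmt13_aux q0 q hq2 hqq G hGb hG e he
  exact ⟨h1, h1.trans h2.symm⟩
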